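/- Let H be a nontrivial 2-subgroup of GL_2(F_3) and let S^1 = F_3^2 be the natural 2-dimensional module and det the determinant character. Then dim (S^1)^H = dim (S^1 ⊗ det)^H; moreover dim (S^1)^H = 1 if and only if H is conjugate in GL_2(F_3) to the subgroup generated by diag(1,-1). -/

import Mathlib

open Matrix

/-- `diag(1, -1) ∈ GL₂(F₃)`. -/
def d1m1 : (Matrix (Fin 2) (Fin 2) (ZMod 3))ˣ :=
  ⟨diagonal ![1, 2], diagonal ![1, 2], by decide, by decide⟩

set_option maxRecDepth 10000
abbrev M2 := Matrix (Fin 2) (Fin 2) (ZMod 3)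
abbrev G2 := M2ˣ

def Dm : M2 := diagonal ![1,2]
def Tm (c : Fin 3) : M2 := !![1,(c:ZMod 3);0,2]
def Sm (c : Fin 3) : M2 := !![2,(c:ZMod 3);0,1]
def Am (c : Fin 3) : M2 := !![1,(c:ZMod 3);0,1]
def Am' (c : Fin 3) : M2 := !![1,-(c:ZMod 3);0,1]
def Bm (c : Fin 3) : M2 := !![-(c:ZMod 3),1;1,0]
def Bm' (c : Fin 3) : M2 := !![0,1;1,(c:ZMod 3)]

lemma fact_A : ∀ c : Fin 3, Am c * Am' c = 1 ∧ Am' c * Am c = 1 ∧ Am c * Dm * Am' c = Tm c := by decide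
lemma fact_B : ∀ c : Fin 3, Bm c * Bm' c = 1 ∧ Bm' c * Bm c = 1 ∧ Bm c * Dm * Bm' c = Sm c := by decide
lemma fact_D : Dm *ᵥ ![1,0] = ![1,0] ∧ Dm.det • (Dm *ᵥ ![0,1]) = ![0,1] ∧ Dm * Dm = 1 := by decide
lemma fact_pow : ∀ m : M2, m^32 = 1 → m^16 = 1 := by decide
lemma fact_fix1 : ∀ m : M2, m *ᵥ ![1,0] = ![1,0] → m *ᵥ ![0,1] = ![0,1] → m = 1 := by decide
lemma fact_fix2 : ∀ m : M2, m.det • (m *ᵥ ![1,0]) = ![1,0] → m.det • (m *ᵥ ![0,1]) = ![0,1] → m = 1 := by decide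
lemma fact_cls1 : ∀ m : M2, m ^ 16 = 1 → m *ᵥ ![1,0] = ![1,0] →
    (m = 1 ∨ m = Tm 0 ∨ m = Tm 1 ∨ m = Tm 2) := by decide
lemma fact_cls2 : ∀ m : M2, m ^ 16 = 1 → m.det • (m *ᵥ ![1,0]) = ![1,0] →
    (m = 1 ∨ m = Sm 0 ∨ m = Sm 1 ∨ m = Sm 2) := by decide
lemma fact_prod1 : ∀ a b : Fin 3, a ≠ b → ¬(Tm a * Tm b = 1 ∨ Tm a * Tm b = Tm 0 ∨ Tm a * Tm b = Tm 1 ∨ Tm a * Tm b = Tm 2) := by decide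
lemma fact_prod2 : ∀ a b : Fin 3, a ≠ b → ¬(Sm a * Sm b = 1 ∨ Sm a * Sm b = Sm 0 ∨ Sm a * Sm b = Sm 1 ∨ Sm a * Sm b = Sm 2) := by decide
lemma fact_ex : ∀ x : Fin 2 → ZMod 3, x ≠ 0 → ∃ m : M2, IsUnit m.det ∧ m *ᵥ ![1,0] = x := by decide
lemma fact_e1 : (![1,0] : Fin 2 → ZMod 3) ≠ 0 ∧ (![0,1] : Fin 2 → ZMod 3) ≠ 0 := by decide

def Au (c : Fin 3) : G2 := ⟨Am c, Am' c, (fact_A c).1, (fact_A c).2.1⟩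
def Bu (c : Fin 3) : G2 := ⟨Bm c, Bm' c, (fact_B c).1, (fact_B c).2.1⟩

lemma val_d1m1 : d1m1.val = Dm := rfl
lemma val_Au (c : Fin 3) : (Au c).val = Am c := rfl
lemma val_Au_inv (c : Fin 3) : ((Au c)⁻¹).val = Am' c := rfl
lemma val_Bu (c : Fin 3) : (Bu c).val = Bm c := rfl
lemma val_Bu_inv (c : Fin 3) : ((Bu c)⁻¹).val = Bm' c := rfl

lemma mat_pow16 : ∀ (k : ℕ) (m : M2), m ^ (2^k) = 1 → m ^ 16 = 1 := by
  intro k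
  induction k with
  | zero => intro m hm; rw [pow_zero, pow_one] at hm; rw [hm, one_pow]
  | succ k ih =>
    intro m hm
    have h2 : (m ^ 2) ^ (2 ^ k) = 1 := by
      rw [← pow_mul, mul_comm, ← pow_succ, hm]
    have := ih (m ^ 2) h2
    rw [← pow_mul] at this
    exact fact_pow m (by norm_num at this ⊢; exact this)

lemma pow16G (u : G2) (h : ∃ k : ℕ, u ^ (2^k) = 1) : u.val ^ 16 = 1 := by
  obtain ⟨k, hk⟩ := h
  have : u.val ^ (2^k) = 1 := by
    rw [← Units.val_pow_eq_pow_val, hk, Units.val_one]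
  exact mat_pow16 k u.val this

lemma inv_mulVec_cancel (g : G2) (v : Fin 2 → ZMod 3) :
    (g⁻¹).val *ᵥ (g.val *ᵥ v) = v := by
  rw [mulVec_mulVec, Units.inv_mul, one_mulVec]

lemma unit_mulVec_ne (g : G2) {v : Fin 2 → ZMod 3} (hv : v ≠ 0) : g.val *ᵥ v ≠ 0 := by
  intro h
  apply hv
  have := inv_mulVec_cancel g v
  rw [h, mulVec_zero] at this
  exact this.symm

lemma conj_val (g h : G2) : (g⁻¹ * h * g).val = (g⁻¹).val * h.val * g.val := by
  simp [Units.val_mul]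

lemma conj_mulVec (g h : G2) (v : Fin 2 → ZMod 3) :
    (g⁻¹ * h * g).val *ᵥ v = (g⁻¹).val *ᵥ (h.val *ᵥ (g.val *ᵥ v)) := by
  rw [conj_val]; simp only [mulVec_mulVec, Matrix.mul_assoc]

lemma conj_det (g h : G2) : (g⁻¹ * h * g).val.det = h.val.det := by
  rw [conj_val, det_mul, det_mul, mul_right_comm]
  have : ((g⁻¹).val).det * (g.val).det = 1 := by rw [← det_mul, Units.inv_mul, det_one]
  rw [this, one_mul]

-- part 2, appended logically
lemma d1m1_sq : d1m1 * d1m1 = 1 := by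
  ext : 1
  show Dm * Dm = 1
  exact fact_D.2.2

lemma d1m1_inv : d1m1⁻¹ = d1m1 := by
  rw [inv_eq_iff_mul_eq_one]; exact d1m1_sq

def Kd : Subgroup G2 where
  carrier := {1, d1m1}
  one_mem' := Or.inl rfl
  mul_mem' := by
    rintro a b (rfl | rfl) (rfl | rfl)
    · exact Or.inl (one_mul 1)
    · exact Or.inr (one_mul _)
    · exact Or.inr (mul_one _)
    · exact Or.inl d1m1_sq
  inv_mem' := by
    rintro a (rfl | rfl)
    · exact Or.inl inv_one
    · exact Or.inr d1m1_inv

lemma closure_d1m1 : Subgroup.closure {d1m1} = Kd := by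
  apply le_antisymm
  · rw [Subgroup.closure_le]
    rintro x rfl
    exact Or.inr rfl
  · rintro x (rfl | rfl)
    · exact Subgroup.one_mem _
    · exact Subgroup.subset_closure rfl

lemma mem_conj_closure (g u : G2) :
    u ∈ Subgroup.map (MulAut.conj g).toMonoidHom (Subgroup.closure {d1m1}) ↔
      u = 1 ∨ u = g * d1m1 * g⁻¹ := by
  rw [closure_d1m1]
  constructor
  · rintro ⟨v, (rfl | rfl), rfl⟩
    · left; simp
    · right; simp [MulAut.conj_apply]
  · rintro (rfl | rfl)
    · exact ⟨1, Or.inl rfl, by simp⟩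
    · exact ⟨d1m1, Or.inr rfl, by simp [MulAut.conj_apply]⟩

-- part 3: classification lemmas
lemma conj_pow_eq (g h : G2) (n : ℕ) : (g⁻¹ * h * g) ^ n = g⁻¹ * h ^ n * g := by
  have := conj_pow (a := g⁻¹) (b := h) (i := n)
  rw [inv_inv] at this
  exact this

lemma pow16_of_mem (H : Subgroup G2) (hH : IsPGroup 2 H) (g : G2) {h : G2} (hh : h ∈ H) :
    ((g⁻¹ * h * g).val) ^ 16 = 1 := by
  obtain ⟨k, hk⟩ := hH ⟨h, hh⟩
  have hk' : h ^ (2^k) = 1 := by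
    have := congrArg (Subtype.val) hk
    simpa using this
  apply pow16G
  exact ⟨k, by rw [conj_pow_eq, hk', mul_one, inv_mul_cancel]⟩

lemma classify1 (H : Subgroup G2) (hH : IsPGroup 2 H) (g : G2) (x : Fin 2 → ZMod 3)
    (hgx : g.val *ᵥ ![1,0] = x) (hfix : ∀ h ∈ H, h.val *ᵥ x = x) :
    ∀ h ∈ H, (g⁻¹ * h * g).val = 1 ∨ ∃ c : Fin 3, (g⁻¹ * h * g).val = Tm c := by
  intro h hh
  have h16 := pow16_of_mem H hH g hh
  have hfx : (g⁻¹ * h * g).val *ᵥ ![1,0] = ![1,0] := by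
    rw [conj_mulVec, hgx, hfix h hh, ← hgx, inv_mulVec_cancel]
  rcases fact_cls1 _ h16 hfx with h1 | h1 | h1 | h1
  · exact Or.inl h1
  · exact Or.inr ⟨0, h1⟩
  · exact Or.inr ⟨1, h1⟩
  · exact Or.inr ⟨2, h1⟩

lemma classify2 (H : Subgroup G2) (hH : IsPGroup 2 H) (g : G2) (x : Fin 2 → ZMod 3)
    (hgx : g.val *ᵥ ![1,0] = x) (hfix : ∀ h ∈ H, h.val.det • (h.val *ᵥ x) = x) :
    ∀ h ∈ H, (g⁻¹ * h * g).val = 1 ∨ ∃ c : Fin 3, (g⁻¹ * h * g).val = Sm c := by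
  intro h hh
  have h16 := pow16_of_mem H hH g hh
  have hfx : (g⁻¹ * h * g).val.det • ((g⁻¹ * h * g).val *ᵥ ![1,0]) = ![1,0] := by
    rw [conj_det, conj_mulVec, hgx, ← mulVec_smul, hfix h hh, ← hgx, inv_mulVec_cancel]
  rcases fact_cls2 _ h16 hfx with h1 | h1 | h1 | h1
  · exact Or.inl h1
  · exact Or.inr ⟨0, h1⟩
  · exact Or.inr ⟨1, h1⟩
  · exact Or.inr ⟨2, h1⟩

lemma eq_one_of_val (u : G2) (h : u.val = 1) : u = 1 := Units.ext h

lemma conj_eq_one_iff' (g h : G2) : (g⁻¹ * h * g).val = 1 ↔ h = 1 := by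
  constructor
  · intro h1
    have : g⁻¹ * h * g = 1 := eq_one_of_val _ h1
    have : h = g * (g⁻¹ * h * g) * g⁻¹ := by group
    rw [‹g⁻¹ * h * g = 1›] at this
    simpa using this
  · rintro rfl; simp

-- part 4: main conjugacy lemmas
lemma main_conj (H : Subgroup G2) (hne : H ≠ ⊥) (g : G2)
    (W : Fin 3 → M2) (CU : Fin 3 → G2)
    (hcls : ∀ h ∈ H, (g⁻¹ * h * g).val = 1 ∨ ∃ c : Fin 3, (g⁻¹ * h * g).val = W c)
    (hprod : ∀ a b : Fin 3, a ≠ b →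
      ¬(W a * W b = 1 ∨ W a * W b = W 0 ∨ W a * W b = W 1 ∨ W a * W b = W 2))
    (hconj : ∀ c, (CU c).val * Dm * ((CU c)⁻¹).val = W c) :
    ∃ g' : G2, Subgroup.map (MulAut.conj g').toMonoidHom (Subgroup.closure {d1m1}) = H := by
  obtain ⟨a, ha⟩ := Subgroup.ne_bot_iff_exists_ne_one.mp hne
  have hh0 : (a : G2) ∈ H := a.2
  have hh0ne : (a : G2) ≠ 1 := fun e => ha (Subtype.ext e)
  set h0 : G2 := (a : G2) with hh0def
  rcases hcls h0 hh0 with h1 | ⟨c, hc⟩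
  · exact absurd ((conj_eq_one_iff' g h0).1 h1) hh0ne
  have key : (g * CU c) * d1m1 * (g * CU c)⁻¹ = h0 := by
    have hval : (CU c * d1m1 * (CU c)⁻¹).val = (g⁻¹ * h0 * g).val := by
      rw [Units.val_mul, Units.val_mul, show d1m1.val = Dm from rfl, hconj c, hc]
    have h2 : CU c * d1m1 * (CU c)⁻¹ = g⁻¹ * h0 * g := Units.ext hval
    calc (g * CU c) * d1m1 * (g * CU c)⁻¹
        = g * (CU c * d1m1 * (CU c)⁻¹) * g⁻¹ := by group
      _ = g * (g⁻¹ * h0 * g) * g⁻¹ := by rw [h2]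
      _ = h0 := by group
  refine ⟨g * CU c, ?_⟩
  ext u
  rw [mem_conj_closure]
  constructor
  · rintro (rfl | rfl)
    · exact H.one_mem
    · rw [key]; exact hh0
  · intro hu
    rcases hcls u hu with h1 | ⟨b, hb⟩
    · left; exact (conj_eq_one_iff' g u).1 h1
    · by_cases hbc : b = c
      · right
        subst hbc
        have heq : (g⁻¹ * u) * g = (g⁻¹ * h0) * g := by
          have : g⁻¹ * u * g = g⁻¹ * h0 * g := Units.ext (by rw [hb, hc])
          simpa [mul_assoc] using this
        have hu0 : u = h0 := mul_left_cancel (mul_right_cancel heq)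
        rw [key, hu0]
      · exfalso
        have hmul : u * h0 ∈ H := H.mul_mem hu hh0
        have hval : (g⁻¹ * (u * h0) * g).val = W b * W c := by
          have hgr : g⁻¹ * (u * h0) * g = (g⁻¹ * u * g) * (g⁻¹ * h0 * g) := by group
          rw [hgr, Units.val_mul, hb, hc]
        apply hprod b c hbc
        rcases hcls _ hmul with h2 | ⟨e, he⟩
        · exact Or.inl (hval ▸ h2)
        · rw [← hval, he]
          right
          fin_cases e
          · exact Or.inl rfl
          · exact Or.inr (Or.inl rfl)
          · exact Or.inr (Or.inr rfl)

lemma P_to_C (H : Subgroup G2) (hH : IsPGroup 2 H) (hne : H ≠ ⊥)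
    (h : ∃ x : Fin 2 → ZMod 3, x ≠ 0 ∧ ∀ h ∈ H, h.val *ᵥ x = x) :
    ∃ g' : G2, Subgroup.map (MulAut.conj g').toMonoidHom (Subgroup.closure {d1m1}) = H := by
  obtain ⟨x, hx0, hfix⟩ := h
  obtain ⟨m, hmdet, hme⟩ := fact_ex x hx0
  have hg := ((Matrix.isUnit_iff_isUnit_det m).2 hmdet).unit_spec
  exact main_conj H hne _ Tm Au
    (classify1 H hH _ x (by rw [hg, hme]) hfix) fact_prod1
    (fun c => by rw [val_Au, val_Au_inv]; exact (fact_A c).2.2)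

lemma Q_to_C (H : Subgroup G2) (hH : IsPGroup 2 H) (hne : H ≠ ⊥)
    (h : ∃ x : Fin 2 → ZMod 3, x ≠ 0 ∧ ∀ h ∈ H, h.val.det • (h.val *ᵥ x) = x) :
    ∃ g' : G2, Subgroup.map (MulAut.conj g').toMonoidHom (Subgroup.closure {d1m1}) = H := by
  obtain ⟨x, hx0, hfix⟩ := h
  obtain ⟨m, hmdet, hme⟩ := fact_ex x hx0
  have hg := ((Matrix.isUnit_iff_isUnit_det m).2 hmdet).unit_spec
  exact main_conj H hne _ Sm Bu
    (classify2 H hH _ x (by rw [hg, hme]) hfix) fact_prod2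
    (fun c => by rw [val_Bu, val_Bu_inv]; exact (fact_B c).2.2)

lemma C_to_both (H : Subgroup G2)
    (h : ∃ g' : G2, Subgroup.map (MulAut.conj g').toMonoidHom (Subgroup.closure {d1m1}) = H) :
    (∃ x : Fin 2 → ZMod 3, x ≠ 0 ∧ ∀ h ∈ H, h.val *ᵥ x = x) ∧
    (∃ x : Fin 2 → ZMod 3, x ≠ 0 ∧ ∀ h ∈ H, h.val.det • (h.val *ᵥ x) = x) := by
  obtain ⟨g, rfl⟩ := h
  constructor
  · refine ⟨g.val *ᵥ ![1,0], unit_mulVec_ne g fact_e1.1, ?_⟩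
    intro h hh
    rcases (mem_conj_closure g h).1 hh with rfl | rfl
    · simp
    · rw [show g * d1m1 * g⁻¹ = (g⁻¹)⁻¹ * d1m1 * g⁻¹ by rw [inv_inv],
        conj_mulVec, inv_mulVec_cancel,
        show d1m1.val *ᵥ ![1,0] = ![1,0] from fact_D.1, inv_inv]
  · refine ⟨g.val *ᵥ ![0,1], unit_mulVec_ne g fact_e1.2, ?_⟩
    intro h hh
    rcases (mem_conj_closure g h).1 hh with rfl | rfl
    · simp
    · rw [show g * d1m1 * g⁻¹ = (g⁻¹)⁻¹ * d1m1 * g⁻¹ by rw [inv_inv],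
        conj_det, conj_mulVec, inv_mulVec_cancel, inv_inv,
        ← mulVec_smul, show d1m1.val.det • (d1m1.val *ᵥ ![0,1]) = ![0,1] from fact_D.2.1]

set_option maxHeartbeats 1000000 in
/-- Let `H` be a nontrivial 2-subgroup of `GL₂(F₃)`, `F1 = (S¹)^H` the fixed
space of the natural module `S¹ = F₃²` and `F2 = (S¹ ⊗ det)^H` the fixed space
of its determinant twist.  Then `dim F1 = dim F2`, and `dim F1 = 1` iff `H` is
conjugate to `⟨diag(1,-1)⟩`. -/
theorem stmt17 (H : Subgroup (Matrix (Fin 2) (Fin 2) (ZMod 3))ˣ)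
    (hH : IsPGroup 2 H) (hne : H ≠ ⊥)
    (F1 F2 : Submodule (ZMod 3) (Fin 2 → ZMod 3))
    (hF1 : (F1 : Set (Fin 2 → ZMod 3)) =
      {x | ∀ g ∈ H, Matrix.mulVec (g : Matrix (Fin 2) (Fin 2) (ZMod 3)) x = x})
    (hF2 : (F2 : Set (Fin 2 → ZMod 3)) =
      {x | ∀ g ∈ H, (g : Matrix (Fin 2) (Fin 2) (ZMod 3)).det •
        Matrix.mulVec (g : Matrix (Fin 2) (Fin 2) (ZMod 3)) x = x}) :
    Module.finrank (ZMod 3) F1 = Module.finrank (ZMod 3) F2 ∧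
    (Module.finrank (ZMod 3) F1 = 1 ↔
      ∃ g : (Matrix (Fin 2) (Fin 2) (ZMod 3))ˣ,
        Subgroup.map (MulAut.conj g).toMonoidHom (Subgroup.closure {d1m1}) = H) := by
  classical
  have hm1 : ∀ v, v ∈ F1 ↔ ∀ g ∈ H, (g : M2) *ᵥ v = v := by
    intro v; rw [← SetLike.mem_coe, hF1]; exact Iff.rfl
  have hm2 : ∀ v, v ∈ F2 ↔ ∀ g ∈ H, (g : M2).det • ((g : M2) *ᵥ v) = v := by
    intro v; rw [← SetLike.mem_coe, hF2]; exact Iff.rfl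
  obtain ⟨a, ha⟩ := Subgroup.ne_bot_iff_exists_ne_one.mp hne
  have ha1 : (a : G2) ≠ 1 := fun e => ha (Subtype.ext e)
  have hF1ne : F1 ≠ ⊤ := by
    intro htop
    refine ha1 (eq_one_of_val _ (fact_fix1 _ ?_ ?_))
    · exact (hm1 ![1,0]).1 (by rw [htop]; trivial) a a.2
    · exact (hm1 ![0,1]).1 (by rw [htop]; trivial) a a.2
  have hF2ne : F2 ≠ ⊤ := by
    intro htop
    refine ha1 (eq_one_of_val _ (fact_fix2 _ ?_ ?_))
    · exact (hm2 ![1,0]).1 (by rw [htop]; trivial) a a.2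
    · exact (hm2 ![0,1]).1 (by rw [htop]; trivial) a a.2
  have hdim : Module.finrank (ZMod 3) (Fin 2 → ZMod 3) = 2 := Module.finrank_fin_fun _
  have hlt1 : Module.finrank (ZMod 3) F1 < 2 := by
    have := Submodule.finrank_lt (K := ZMod 3) hF1ne
    rwa [hdim] at this
  have hlt2 : Module.finrank (ZMod 3) F2 < 2 := by
    have := Submodule.finrank_lt (K := ZMod 3) hF2ne
    rwa [hdim] at this
  have h1 : Module.finrank (ZMod 3) F1 = 1 ↔
      ∃ x : Fin 2 → ZMod 3, x ≠ 0 ∧ ∀ h ∈ H, (h : M2) *ᵥ x = x := by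
    constructor
    · intro he
      have hb : F1 ≠ ⊥ := by
        intro hb; rw [hb, finrank_bot] at he; exact one_ne_zero he.symm
      obtain ⟨x, hxF, hx0⟩ := Submodule.ne_bot_iff F1 |>.mp hb
      exact ⟨x, hx0, (hm1 x).1 hxF⟩
    · rintro ⟨x, hx0, hx⟩
      have hxF : x ∈ F1 := (hm1 x).2 hx
      have hb : F1 ≠ ⊥ := fun hb => hx0 (by simpa [hb] using hxF)
      have h0 : Module.finrank (ZMod 3) F1 ≠ 0 :=
        fun h => hb (Submodule.finrank_eq_zero.mp h)
      omega
  have h2 : Module.finrank (ZMod 3) F2 = 1 ↔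
      ∃ x : Fin 2 → ZMod 3, x ≠ 0 ∧ ∀ h ∈ H, (h : M2).det • ((h : M2) *ᵥ x) = x := by
    constructor
    · intro he
      have hb : F2 ≠ ⊥ := by
        intro hb; rw [hb, finrank_bot] at he; exact one_ne_zero he.symm
      obtain ⟨x, hxF, hx0⟩ := Submodule.ne_bot_iff F2 |>.mp hb
      exact ⟨x, hx0, (hm2 x).1 hxF⟩
    · rintro ⟨x, hx0, hx⟩
      have hxF : x ∈ F2 := (hm2 x).2 hx
      have hb : F2 ≠ ⊥ := fun hb => hx0 (by simpa [hb] using hxF)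
      have h0 : Module.finrank (ZMod 3) F2 ≠ 0 :=
        fun h => hb (Submodule.finrank_eq_zero.mp h)
      omega
  have hC1 : (∃ x : Fin 2 → ZMod 3, x ≠ 0 ∧ ∀ h ∈ H, (h : M2) *ᵥ x = x) ↔
      ∃ g : G2, Subgroup.map (MulAut.conj g).toMonoidHom (Subgroup.closure {d1m1}) = H :=
    ⟨P_to_C H hH hne, fun hc => (C_to_both H hc).1⟩
  have hC2 : (∃ x : Fin 2 → ZMod 3, x ≠ 0 ∧ ∀ h ∈ H, (h : M2).det • ((h : M2) *ᵥ x) = x) ↔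
      ∃ g : G2, Subgroup.map (MulAut.conj g).toMonoidHom (Subgroup.closure {d1m1}) = H :=
    ⟨Q_to_C H hH hne, fun hc => (C_to_both H hc).2⟩
  have hiff : Module.finrank (ZMod 3) F1 = 1 ↔ Module.finrank (ZMod 3) F2 = 1 :=
    (h1.trans hC1).trans (h2.trans hC2).symm
  exact ⟨by omega, h1.trans hC1⟩
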